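/- If u_1,...,u_n are unit vectors in ℝ² (indices mod n, so u_{n+1} = u_1) and d_1,...,d_n are positive reals with ∑_{i=1}^n d_i u_i = 0, then ∑_{i=1}^n ‖u_{i+1} − u_i‖ > 1. -/

import Mathlib

open scoped InnerProductSpace

open Finset Fin.NatCast in
lemma path_bound_aux (n : ℕ) [NeZero n] (u : Fin n → EuclideanSpace ℝ (Fin 2))
    (j : Fin n) : ‖u j - u 0‖ ≤ ∑ i : Fin n, ‖u (i + 1) - u i‖ := by
  have h1 : ∑ k ∈ Finset.range j.val, (u (↑k + 1) - u ↑k) = u j - u 0 := by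
    have := Finset.sum_range_sub (fun k : ℕ => u ↑k) j.val
    simpa [Nat.cast_add, Nat.cast_one, Fin.cast_val_eq_self] using this
  calc ‖u j - u 0‖ = ‖∑ k ∈ Finset.range j.val, (u (↑k + 1) - u ↑k)‖ := by rw [h1]
    _ ≤ ∑ k ∈ Finset.range j.val, ‖u (↑k + 1) - u ↑k‖ := norm_sum_le _ _
    _ ≤ ∑ k ∈ Finset.range n, ‖u (↑k + 1) - u ↑k‖ :=
        Finset.sum_le_sum_of_subset_of_nonneg (Finset.range_subset_range.2 j.isLt.le)
          (fun _ _ _ => norm_nonneg _)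
    _ = ∑ i : Fin n, ‖u (i + 1) - u i‖ := by
        rw [← Fin.sum_univ_eq_sum_range (fun k : ℕ => ‖u (↑k + 1) - u ↑k‖) n]
        simp [Fin.cast_val_eq_self]

/-- If unit vectors `u_i` in ℝ² (cyclic indexing) satisfy `∑ d_i u_i = 0` with all
`d_i > 0`, then `∑ ‖u_{i+1} − u_i‖ > 1`. -/
theorem sum_consecutive_diff_gt_one (n : ℕ) [NeZero n]
    (u : Fin n → EuclideanSpace ℝ (Fin 2)) (hu : ∀ i, ‖u i‖ = 1)
    (d : Fin n → ℝ) (hd : ∀ i, 0 < d i)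
    (hsum : ∑ i, d i • u i = 0) :
    1 < ∑ i : Fin n, ‖u (i + 1) - u i‖ := by
  -- find j with ⟪u 0, u j⟫ ≤ 0
  have hinner : ∑ i, d i * ⟪u 0, u i⟫_ℝ = 0 := by
    have : ⟪u 0, ∑ i, d i • u i⟫_ℝ = 0 := by rw [hsum, inner_zero_right]
    simpa [inner_sum, inner_smul_right] using this
  obtain ⟨j, hj⟩ : ∃ j : Fin n, ⟪u 0, u j⟫_ℝ ≤ 0 := by
    by_contra h
    push_neg at h
    have hpos : 0 < ∑ i, d i * ⟪u 0, u i⟫_ℝ := by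
      apply Finset.sum_pos (fun i _ => mul_pos (hd i) (h i))
      exact Finset.univ_nonempty
    linarith
  have hnorm : Real.sqrt 2 ≤ ‖u j - u 0‖ := by
    have hsq : (2 : ℝ) ≤ ‖u j - u 0‖ ^ 2 := by
      have := @norm_sub_sq_real (EuclideanSpace ℝ (Fin 2)) _ _ (u j) (u 0)
      have hji : ⟪u j, u 0⟫_ℝ ≤ 0 := by rwa [real_inner_comm] at hj
      rw [this, hu j, hu 0]
      nlinarith
    calc Real.sqrt 2 ≤ Real.sqrt (‖u j - u 0‖ ^ 2) := Real.sqrt_le_sqrt hsq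
      _ = ‖u j - u 0‖ := by rw [Real.sqrt_sq (norm_nonneg _)]
  have h2 : (1 : ℝ) < Real.sqrt 2 := by
    have : (1 : ℝ) = Real.sqrt 1 := (Real.sqrt_one).symm
    rw [this]
    exact Real.sqrt_lt_sqrt (by norm_num) (by norm_num)
  calc (1 : ℝ) < Real.sqrt 2 := h2
    _ ≤ ‖u j - u 0‖ := hnorm
    _ ≤ ∑ i : Fin n, ‖u (i + 1) - u i‖ := path_bound_aux n u j
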